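/- Let Ω be a bounded Lipschitz domain, u harmonic with trace g, and v harmonic. For every τ ∈ H(div,Ω) with div τ = 0, one has the guaranteed lower bound 2⟨g − v|_Γ, τ·n|_Γ⟩_Γ − ‖τ‖²_{L²(Ω)} ≤ ‖∇(u−v)‖²_{L²(Ω)}. -/
import Mathlib

open scoped RealInnerProductSpace

/-- Abstract Sobolev setting (see the functional a posteriori error identity):
`V = H¹(Ω)`, `L2v = L²(Ω;ℝ^d)`, `L2 = L²(Ω)`, `Ht = H^{1/2}(Γ)`, `Hm = H^{−1/2}(Γ)`,
`Hd = H(div,Ω)`; `grad`, `emb`, `tr`, `toL2v`, `dvg`, `ntr`, `pair` as usual, with the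
integration-by-parts formula `hIBP` defining the normal trace.

Statement: for `u, v` weakly harmonic with `u|_Γ = g`, every divergence-free
`τ ∈ H(div,Ω)` gives the guaranteed lower bound
`2⟨g − v|_Γ, τ·n⟩_Γ − ‖τ‖²_{L²(Ω)} ≤ ‖∇(u−v)‖²_{L²(Ω)}`. -/
theorem stmt5
    {V L2v L2 Ht Hm Hd : Type*}
    [AddCommGroup V] [Module ℝ V]
    [NormedAddCommGroup L2v] [InnerProductSpace ℝ L2v]
    [NormedAddCommGroup L2] [InnerProductSpace ℝ L2]
    [AddCommGroup Ht] [Module ℝ Ht] [AddCommGroup Hm] [Module ℝ Hm]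
    [AddCommGroup Hd] [Module ℝ Hd]
    (grad : V →ₗ[ℝ] L2v) (emb : V →ₗ[ℝ] L2) (tr : V →ₗ[ℝ] Ht)
    (toL2v : Hd →ₗ[ℝ] L2v) (dvg : Hd →ₗ[ℝ] L2) (ntr : Hd →ₗ[ℝ] Hm)
    (pair : Ht →ₗ[ℝ] Hm →ₗ[ℝ] ℝ)
    (hIBP : ∀ (w : V) (σ : Hd),
      ⟪grad w, toL2v σ⟫ = pair (tr w) (ntr σ) - ⟪emb w, dvg σ⟫)
    (u v : V) (g : Ht) (hg : tr u = g)
    (hu : ∀ φ : V, tr φ = 0 → ⟪grad u, grad φ⟫ = 0)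
    (hv : ∀ φ : V, tr φ = 0 → ⟪grad v, grad φ⟫ = 0) :
    ∀ τ : Hd, dvg τ = 0 →
      2 * pair (g - tr v) (ntr τ) - ‖toL2v τ‖ ^ 2 ≤ ‖grad (u - v)‖ ^ 2 := by
  intro τ hτ
  have h := hIBP (u - v) τ
  simp only [map_sub, hg, hτ, inner_zero_right, sub_zero, LinearMap.sub_apply] at h ⊢
  set a := grad u - grad v with ha
  rw [← h]
  nlinarith [sq_nonneg (‖a - toL2v τ‖), real_inner_self_eq_norm_sq (a - toL2v τ), inner_sub_sub_self (𝕜 := ℝ) a (toL2v τ), real_inner_self_eq_norm_sq a, real_inner_self_eq_norm_sq (toL2v τ), real_inner_comm a (toL2v τ)]
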